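/- Let R be a commutative ring and g ≥ 1. The group Aut(X^{#2g}) of R-linear automorphisms of R^{2g} preserving λ_{2g} and ∂_{2g} is isomorphic, as a group, to the stabilizer in Sp_{2g}(R) of the first standard basis vector e₁ of R^{2g}. -/

import Mathlib

/-- The bilinear form of the formed space with boundary `X^{#n}`. -/
def lamX (R : Type) [CommRing R] (n : ℕ) (x y : Fin n → R) : R :=
  ∑ i : Fin n, ∑ j : Fin n, (if (i : ℕ) < (j : ℕ) then x i * y j
    else if (j : ℕ) < (i : ℕ) then -(x i * y j) else 0)

/-- The boundary map of `X^{#n}`. -/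
def bdX (R : Type) [CommRing R] (n : ℕ) (x : Fin n → R) : R := ∑ i, x i

/-- The standard symplectic form on `R^n` (interleaved hyperbolic pairs), i.e. the form of the
hyperbolic formed space `H^{⊕ g}` when `n = 2g`. -/
def omegaH (R : Type) [CommRing R] (n : ℕ) (x y : Fin n → R) : R :=
  ∑ i : Fin n, ∑ j : Fin n, (if (i : ℕ) % 2 = 0 ∧ (j : ℕ) = (i : ℕ) + 1 then x i * y j
    else if (j : ℕ) % 2 = 0 ∧ (i : ℕ) = (j : ℕ) + 1 then -(x i * y j) else 0)

/-- The symplectic group `Sp_n(R)`, as the subgroup of linear automorphisms of `R^n`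
preserving the standard symplectic form. -/
def SpGrp (R : Type) [CommRing R] (n : ℕ) : Subgroup ((Fin n → R) ≃ₗ[R] (Fin n → R)) where
  carrier := {A | ∀ x y, omegaH R n (A x) (A y) = omegaH R n x y}
  one_mem' := by intro x y; rfl
  mul_mem' := by
    intro a b ha hb x y
    show omegaH R n (a (b x)) (a (b y)) = omegaH R n x y
    rw [ha, hb]
  inv_mem' := by
    intro a ha x y
    show omegaH R n (a.symm x) (a.symm y) = omegaH R n x y
    conv_rhs => rw [← a.apply_symm_apply x, ← a.apply_symm_apply y]
    exact (ha _ _).symm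

/-- The automorphism group of the formed space with boundary `X^{#n}`, as the subgroup of
linear automorphisms of `R^n` preserving `λ_n` and `∂_n`. -/
def AutX (R : Type) [CommRing R] (n : ℕ) : Subgroup ((Fin n → R) ≃ₗ[R] (Fin n → R)) where
  carrier := {A | (∀ x y, lamX R n (A x) (A y) = lamX R n x y) ∧
    ∀ x, bdX R n (A x) = bdX R n x}
  one_mem' := ⟨fun _ _ => rfl, fun _ => rfl⟩
  mul_mem' := by
    intro a b ha hb
    refine ⟨fun x y => ?_, fun x => ?_⟩
    · show lamX R n (a (b x)) (a (b y)) = lamX R n x y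
      rw [ha.1, hb.1]
    · show bdX R n (a (b x)) = bdX R n x
      rw [ha.2, hb.2]
  inv_mem' := by
    intro a ha
    refine ⟨fun x y => ?_, fun x => ?_⟩
    · show lamX R n (a.symm x) (a.symm y) = lamX R n x y
      conv_rhs => rw [← a.apply_symm_apply x, ← a.apply_symm_apply y]
      exact (ha.1 _ _).symm
    · show bdX R n (a.symm x) = bdX R n x
      conv_rhs => rw [← a.apply_symm_apply x]
      exact (ha.2 _).symm

/-- The first standard basis vector `e₁` of `R^n`. -/
def stdE1 (R : Type) [CommRing R] (n : ℕ) : Fin n → R := fun i => if (i : ℕ) = 0 then 1 else 0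

/-- The stabilizer in `Sp_n(R)` of the first standard basis vector `e₁`. -/
def SpStabE1 (R : Type) [CommRing R] (n : ℕ) : Subgroup ((Fin n → R) ≃ₗ[R] (Fin n → R)) where
  carrier := {A | (∀ x y, omegaH R n (A x) (A y) = omegaH R n x y) ∧ A (stdE1 R n) = stdE1 R n}
  one_mem' := ⟨fun _ _ => rfl, rfl⟩
  mul_mem' := by
    intro a b ha hb
    refine ⟨fun x y => ?_, ?_⟩
    · show omegaH R n (a (b x)) (a (b y)) = omegaH R n x y
      rw [ha.1, hb.1]
    · show a (b (stdE1 R n)) = stdE1 R n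
      rw [hb.2, ha.2]
  inv_mem' := by
    intro a ha
    refine ⟨fun x y => ?_, ?_⟩
    · show omegaH R n (a.symm x) (a.symm y) = omegaH R n x y
      conv_rhs => rw [← a.apply_symm_apply x, ← a.apply_symm_apply y]
      exact (ha.1 _ _).symm
    · show a.symm (stdE1 R n) = stdE1 R n
      conv_lhs => rw [← ha.2]
      exact a.symm_apply_apply _

namespace AutXAux
open Finset

variable {R : Type} [CommRing R]

def extF {n : ℕ} (x : Fin n → R) : ℕ → R := fun i => if h : i < n then x ⟨i, h⟩ else 0

lemma extF_lt {n : ℕ} (x : Fin n → R) {i : ℕ} (h : i < n) : extF x i = x ⟨i, h⟩ := dif_pos h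

lemma extF_add {n : ℕ} (x y : Fin n → R) (i : ℕ) : extF (x + y) i = extF x i + extF y i := by
  unfold extF; split <;> simp

lemma extF_smul {n : ℕ} (r : R) (x : Fin n → R) (i : ℕ) : extF (r • x) i = r * extF x i := by
  unfold extF; split <;> simp

lemma sum_range_two_mul (g : ℕ) (f : ℕ → R) :
    ∑ i ∈ range (2*g), f i = ∑ k ∈ range g, (f (2*k) + f (2*k+1)) := by
  induction g with
  | zero => simp
  | succ m ih =>
      rw [show 2*(m+1) = (2*m+1)+1 by ring, sum_range_succ, sum_range_succ, sum_range_succ, ih]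
      ring

lemma sum_Ico_two_mul {a b : ℕ} (hab : a ≤ b) (f : ℕ → R) :
    ∑ j ∈ Ico a b, (f (2*j) + f (2*j+1)) = ∑ j ∈ Ico (2*a) (2*b), f j := by
  induction b, hab using Nat.le_induction with
  | base => simp
  | succ b hab ih =>
      rw [sum_Ico_succ_top hab, ih, show 2*(b+1) = (2*b+1)+1 by ring,
        sum_Ico_succ_top (by omega), sum_Ico_succ_top (by omega)]
      ring

lemma fin_sum_ext {n : ℕ} (f : ℕ → R) : ∑ i : Fin n, f i.val = ∑ i ∈ range n, f i :=
  Fin.sum_univ_eq_sum_range f n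

lemma double_sum_ext {n : ℕ} (F : ℕ → ℕ → R) :
    (∑ i : Fin n, ∑ j : Fin n, F i.val j.val) = ∑ i ∈ range n, ∑ j ∈ range n, F i j := by
  rw [← fin_sum_ext (fun i => ∑ j ∈ range n, F i j)]
  exact Finset.sum_congr rfl fun i _ => fin_sum_ext (F i.val)

lemma omega_reduce (g : ℕ) (x y : Fin (2*g) → R) :
    omegaH R (2*g) x y = ∑ k ∈ range g, extF x (2*k) * extF y (2*k+1)
      - ∑ k ∈ range g, extF x (2*k+1) * extF y (2*k) := by
  have h0 : omegaH R (2*g) x y = ∑ i ∈ range (2*g), ∑ j ∈ range (2*g),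
      ((if j = i+1 then (if i % 2 = 0 then extF x i * extF y j else 0) else 0)
        + (if i = j+1 then (if j % 2 = 0 then -(extF x i * extF y j) else 0) else 0)) := by
    rw [← double_sum_ext]
    unfold omegaH
    apply Finset.sum_congr rfl; intro i _
    apply Finset.sum_congr rfl; intro j _
    rw [extF_lt x i.isLt, extF_lt y j.isLt, Fin.eta, Fin.eta]
    split_ifs <;> first | ring1 | (exfalso; omega)
  rw [h0]
  have h1 : ∀ i ∈ range (2*g), (∑ j ∈ range (2*g),
      ((if j = i+1 then (if i % 2 = 0 then extF x i * extF y j else 0) else 0)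
        + (if i = j+1 then (if j % 2 = 0 then -(extF x i * extF y j) else 0) else 0)))
      = (if i+1 ∈ range (2*g) then (if i % 2 = 0 then extF x i * extF y (i+1) else 0) else 0)
        + (∑ j ∈ range (2*g), (if i = j+1 then (if j % 2 = 0 then -(extF x i * extF y j) else 0) else 0)) := by
    intro i _
    rw [sum_add_distrib, Finset.sum_ite_eq' (range (2*g)) (i+1)
      (fun j => if i % 2 = 0 then extF x i * extF y j else 0)]
  rw [Finset.sum_congr rfl h1, sum_add_distrib]
  have h2 : ∑ i ∈ range (2*g), (if i+1 ∈ range (2*g) then (if i % 2 = 0 then extF x i * extF y (i+1) else 0) else 0)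
      = ∑ k ∈ range g, extF x (2*k) * extF y (2*k+1) := by
    rw [sum_range_two_mul]
    apply Finset.sum_congr rfl; intro k hk
    rw [mem_range] at hk
    rw [if_pos (mem_range.mpr (by omega)), if_pos (by omega),
      if_neg (show ¬ (2*k+1) % 2 = 0 by omega), ite_self, add_zero]
  have h3 : ∑ i ∈ range (2*g), (∑ j ∈ range (2*g), (if i = j+1 then (if j % 2 = 0 then -(extF x i * extF y j) else 0) else 0))
      = -∑ k ∈ range g, extF x (2*k+1) * extF y (2*k) := by
    rw [Finset.sum_comm]
    have h4 : ∀ j ∈ range (2*g), (∑ i ∈ range (2*g), (if i = j+1 then (if j % 2 = 0 then -(extF x i * extF y j) else 0) else 0))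
        = if j+1 ∈ range (2*g) then (if j % 2 = 0 then -(extF x (j+1) * extF y j) else 0) else 0 := by
      intro j _
      rw [Finset.sum_ite_eq' (range (2*g)) (j+1)
        (fun i => if j % 2 = 0 then -(extF x i * extF y j) else 0)]
    rw [Finset.sum_congr rfl h4, sum_range_two_mul, ← Finset.sum_neg_distrib]
    apply Finset.sum_congr rfl; intro k hk
    rw [mem_range] at hk
    rw [if_pos (mem_range.mpr (by omega)), if_pos (by omega),
      if_neg (show ¬ (2*k+1) % 2 = 0 by omega), ite_self, add_zero]
  rw [h2, h3, sub_eq_add_neg]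

lemma lam_reduce (n : ℕ) (x y : Fin n → R) :
    lamX R n x y = ∑ i ∈ range n, extF x i * (∑ j ∈ Ico (i+1) n, extF y j)
      - ∑ i ∈ range n, (∑ j ∈ Ico (i+1) n, extF x j) * extF y i := by
  have h0 : lamX R n x y = ∑ i ∈ range n, ∑ j ∈ range n,
      ((if i < j then extF x i * extF y j else 0)
        + (if j < i then -(extF x i * extF y j) else 0)) := by
    rw [← double_sum_ext]
    unfold lamX
    apply Finset.sum_congr rfl; intro i _
    apply Finset.sum_congr rfl; intro j _
    rw [extF_lt x i.isLt, extF_lt y j.isLt, Fin.eta, Fin.eta]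
    split_ifs <;> first | ring1 | (exfalso; omega)
  rw [h0]
  have filt : ∀ i : ℕ, (range n).filter (fun j => i < j) = Ico (i+1) n := by
    intro i; ext m; simp [mem_Ico]; omega
  have h1 : ∀ i ∈ range n, (∑ j ∈ range n,
      ((if i < j then extF x i * extF y j else 0) + (if j < i then -(extF x i * extF y j) else 0)))
      = extF x i * (∑ j ∈ Ico (i+1) n, extF y j)
        + (∑ j ∈ range n, (if j < i then -(extF x i * extF y j) else 0)) := by
    intro i _
    rw [sum_add_distrib, ← Finset.sum_filter, filt i, mul_sum]
  rw [Finset.sum_congr rfl h1, sum_add_distrib]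
  have h2 : ∑ i ∈ range n, (∑ j ∈ range n, (if j < i then -(extF x i * extF y j) else 0))
      = -∑ i ∈ range n, (∑ j ∈ Ico (i+1) n, extF x j) * extF y i := by
    rw [Finset.sum_comm, ← Finset.sum_neg_distrib]
    apply Finset.sum_congr rfl; intro j _
    rw [← Finset.sum_filter, filt j, Finset.sum_neg_distrib, Finset.sum_mul]
  rw [h2, sub_eq_add_neg]

def Umap (g : ℕ) (x : Fin (2*g) → R) : Fin (2*g) → R := fun i =>
  if i.val % 2 = 0 then extF x i.val + extF x (i.val + 1)
  else ∑ j ∈ Ico i.val (2*g), extF x j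

def Vmap (g : ℕ) (u : Fin (2*g) → R) : Fin (2*g) → R := fun i =>
  if i.val % 2 = 0 then (∑ j ∈ Ico (i.val/2) g, extF u (2*j)) - extF u (i.val + 1)
  else extF u i.val - ∑ j ∈ Ico (i.val/2 + 1) g, extF u (2*j)

lemma extF_Umap_even {g k : ℕ} (hk : k < g) (x : Fin (2*g) → R) :
    extF (Umap g x) (2*k) = extF x (2*k) + extF x (2*k+1) := by
  rw [extF_lt _ (by omega)]
  show (if (2*k) % 2 = 0 then _ else _) = _
  rw [if_pos (by omega)]

lemma extF_Umap_odd {g k : ℕ} (hk : k < g) (x : Fin (2*g) → R) :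
    extF (Umap g x) (2*k+1) = ∑ j ∈ Ico (2*k+1) (2*g), extF x j := by
  rw [extF_lt _ (by omega)]
  show (if (2*k+1) % 2 = 0 then _ else _) = _
  rw [if_neg (by omega)]

lemma extF_Vmap_even {g k : ℕ} (hk : k < g) (u : Fin (2*g) → R) :
    extF (Vmap g u) (2*k) = (∑ j ∈ Ico k g, extF u (2*j)) - extF u (2*k+1) := by
  rw [extF_lt _ (by omega)]
  show (if (2*k) % 2 = 0 then (∑ j ∈ Ico ((2*k)/2) g, extF u (2*j)) - extF u (2*k+1) else _) = _
  rw [if_pos (by omega), Nat.mul_div_cancel_left k (by norm_num)]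

lemma extF_Vmap_odd {g k : ℕ} (hk : k < g) (u : Fin (2*g) → R) :
    extF (Vmap g u) (2*k+1) = extF u (2*k+1) - ∑ j ∈ Ico (k+1) g, extF u (2*j) := by
  rw [extF_lt _ (by omega)]
  show (if (2*k+1) % 2 = 0 then _ else extF u (2*k+1) - ∑ j ∈ Ico ((2*k+1)/2 + 1) g, extF u (2*j)) = _
  rw [if_neg (by omega), show (2*k+1)/2 = k by omega]

lemma Umap_add (g : ℕ) (x y : Fin (2*g) → R) : Umap g (x + y) = Umap g x + Umap g y := by
  funext i
  show (if i.val % 2 = 0 then _ else _) = ((if i.val % 2 = 0 then _ else _) : R) + (if i.val % 2 = 0 then _ else _)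
  split
  · rw [extF_add, extF_add]; ring
  · rw [← sum_add_distrib]
    exact Finset.sum_congr rfl fun j _ => extF_add x y j

lemma Umap_smul (g : ℕ) (r : R) (x : Fin (2*g) → R) : Umap g (r • x) = r • Umap g x := by
  funext i
  show (if i.val % 2 = 0 then _ else _) = r • ((if i.val % 2 = 0 then _ else _) : R)
  rw [smul_eq_mul]
  split
  · rw [extF_smul, extF_smul]; ring
  · rw [mul_sum]
    exact Finset.sum_congr rfl fun j _ => extF_smul r x j

lemma Vmap_Umap (g : ℕ) (x : Fin (2*g) → R) : Vmap g (Umap g x) = x := by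
  funext i
  have hi := i.isLt
  show (if _ then _ else _) = x i
  by_cases hpar : i.val % 2 = 0
  · obtain ⟨k, hk⟩ : ∃ k, i.val = 2*k := ⟨i.val/2, by omega⟩
    have hkg : k < g := by omega
    rw [if_pos hpar, hk, show (2*k)/2 = k by omega]
    have hsum : ∑ j ∈ Ico k g, extF (Umap g x) (2*j) = ∑ j ∈ Ico (2*k) (2*g), extF x j := by
      rw [← sum_Ico_two_mul (le_of_lt hkg)]
      exact Finset.sum_congr rfl fun j hj => extF_Umap_even (mem_Ico.mp hj).2 x
    rw [hsum, extF_Umap_odd hkg, Finset.sum_eq_sum_Ico_succ_bot (by omega) (extF x),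
      show 2*k+1 = 2*k+1 from rfl]
    rw [add_sub_cancel_right, ← hk, extF_lt x hi]
  · obtain ⟨k, hk⟩ : ∃ k, i.val = 2*k+1 := ⟨i.val/2, by omega⟩
    have hkg : k < g := by omega
    rw [if_neg hpar, hk, show (2*k+1)/2 = k by omega]
    have hsum : ∑ j ∈ Ico (k+1) g, extF (Umap g x) (2*j) = ∑ j ∈ Ico (2*k+2) (2*g), extF x j := by
      rw [← show 2*(k+1) = 2*k+2 by ring, ← sum_Ico_two_mul (by omega)]
      exact Finset.sum_congr rfl fun j hj => extF_Umap_even (mem_Ico.mp hj).2 x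
    rw [hsum, extF_Umap_odd hkg, Finset.sum_eq_sum_Ico_succ_bot (show 2*k+1 < 2*g by omega) (extF x),
      show 2*k+1+1 = 2*k+2 from rfl, add_sub_cancel_right, ← hk, extF_lt x hi]

lemma Vmap_pair {g k : ℕ} (hk : k < g) (u : Fin (2*g) → R) :
    extF (Vmap g u) (2*k) + extF (Vmap g u) (2*k+1) = extF u (2*k) := by
  rw [extF_Vmap_even hk, extF_Vmap_odd hk,
    Finset.sum_eq_sum_Ico_succ_bot hk (fun j => extF u (2*j))]
  ring

lemma Umap_Vmap (g : ℕ) (u : Fin (2*g) → R) : Umap g (Vmap g u) = u := by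
  funext i
  have hi := i.isLt
  show (if _ then _ else _) = u i
  by_cases hpar : i.val % 2 = 0
  · obtain ⟨k, hk⟩ : ∃ k, i.val = 2*k := ⟨i.val/2, by omega⟩
    have hkg : k < g := by omega
    rw [if_pos hpar, hk, Vmap_pair hkg, ← hk, extF_lt u hi]
  · obtain ⟨k, hk⟩ : ∃ k, i.val = 2*k+1 := ⟨i.val/2, by omega⟩
    have hkg : k < g := by omega
    rw [if_neg hpar, hk, Finset.sum_eq_sum_Ico_succ_bot (show 2*k+1 < 2*g by omega) (extF (Vmap g u)),
      show 2*k+1+1 = 2*(k+1) by ring, ← sum_Ico_two_mul (show k+1 ≤ g by omega),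
      Finset.sum_congr rfl (fun j hj => Vmap_pair (mem_Ico.mp hj).2 u),
      extF_Vmap_odd hkg]
    rw [← hk, extF_lt u hi]
    ring

lemma omega_Umap (g : ℕ) (x y : Fin (2*g) → R) :
    omegaH R (2*g) (Umap g x) (Umap g y) = lamX R (2*g) x y := by
  rw [omega_reduce, lam_reduce]
  have hx := sum_range_two_mul g (fun i => extF x i * (∑ j ∈ Ico (i+1) (2*g), extF y j))
  have hy := sum_range_two_mul g (fun i => (∑ j ∈ Ico (i+1) (2*g), extF x j) * extF y i)
  rw [hx, hy, ← sum_sub_distrib, ← sum_sub_distrib]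
  apply Finset.sum_congr rfl
  intro k hk
  rw [mem_range] at hk
  rw [extF_Umap_even hk, extF_Umap_even hk, extF_Umap_odd hk, extF_Umap_odd hk,
    Finset.sum_eq_sum_Ico_succ_bot (show 2*k+1 < 2*g by omega) (extF x),
    Finset.sum_eq_sum_Ico_succ_bot (show 2*k+1 < 2*g by omega) (extF y)]
  ring

lemma omega_add_left (g : ℕ) (x x' y : Fin (2*g) → R) :
    omegaH R (2*g) (x + x') y = omegaH R (2*g) x y + omegaH R (2*g) x' y := by
  simp only [omega_reduce, extF_add, add_mul]
  rw [sum_add_distrib, sum_add_distrib]; ring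

lemma omega_add_right (g : ℕ) (x y y' : Fin (2*g) → R) :
    omegaH R (2*g) x (y + y') = omegaH R (2*g) x y + omegaH R (2*g) x y' := by
  simp only [omega_reduce, extF_add, mul_add]
  rw [sum_add_distrib, sum_add_distrib]; ring

lemma omega_smul_left (g : ℕ) (r : R) (x y : Fin (2*g) → R) :
    omegaH R (2*g) (r • x) y = r * omegaH R (2*g) x y := by
  simp only [omega_reduce, extF_smul, mul_assoc, ← Finset.mul_sum]
  ring

lemma omega_self (g : ℕ) (x : Fin (2*g) → R) : omegaH R (2*g) x x = 0 := by
  rw [omega_reduce, sub_eq_zero]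
  exact Finset.sum_congr rfl fun k _ => mul_comm _ _

lemma omega_antisym (g : ℕ) (x y : Fin (2*g) → R) :
    omegaH R (2*g) x y = - omegaH R (2*g) y x := by
  rw [omega_reduce, omega_reduce,
    show (∑ k ∈ range g, extF y (2*k) * extF x (2*k+1)) = ∑ k ∈ range g, extF x (2*k+1) * extF y (2*k)
      from Finset.sum_congr rfl fun k _ => mul_comm _ _,
    show (∑ k ∈ range g, extF y (2*k+1) * extF x (2*k)) = ∑ k ∈ range g, extF x (2*k) * extF y (2*k+1)
      from Finset.sum_congr rfl fun k _ => mul_comm _ _]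
  ring

lemma omega_smul_right (g : ℕ) (r : R) (x y : Fin (2*g) → R) :
    omegaH R (2*g) x (r • y) = r * omegaH R (2*g) x y := by
  rw [omega_antisym, omega_smul_left, omega_antisym g x y]
  ring

def cvec (g : ℕ) : Fin (2*g) → R := fun i => if i.val % 2 = 1 ∨ i.val = 0 then -1 else 0

def Pmap (g : ℕ) (u : Fin (2*g) → R) : Fin (2*g) → R :=
  u + (omegaH R (2*g) u (cvec g)) • cvec g

def Qmap (g : ℕ) (u : Fin (2*g) → R) : Fin (2*g) → R :=
  u - (omegaH R (2*g) u (cvec g)) • cvec g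

lemma omega_Pmap_cvec (g : ℕ) (u : Fin (2*g) → R) :
    omegaH R (2*g) (Pmap g u) (cvec g) = omegaH R (2*g) u (cvec g) := by
  unfold Pmap
  rw [omega_add_left, omega_smul_left, omega_self, mul_zero, add_zero]

lemma Qmap_Pmap (g : ℕ) (u : Fin (2*g) → R) : Qmap g (Pmap g u) = u := by
  unfold Qmap
  rw [omega_Pmap_cvec]
  unfold Pmap
  abel

lemma omega_Qmap_cvec (g : ℕ) (u : Fin (2*g) → R) :
    omegaH R (2*g) (Qmap g u) (cvec g) = omegaH R (2*g) u (cvec g) := by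
  unfold Qmap
  rw [sub_eq_add_neg, omega_add_left, ← neg_smul, omega_smul_left, omega_self, mul_zero, add_zero]

lemma Pmap_Qmap (g : ℕ) (u : Fin (2*g) → R) : Pmap g (Qmap g u) = u := by
  unfold Pmap
  rw [omega_Qmap_cvec]
  unfold Qmap
  abel

lemma Pmap_add (g : ℕ) (u v : Fin (2*g) → R) : Pmap g (u + v) = Pmap g u + Pmap g v := by
  unfold Pmap
  rw [omega_add_left, add_smul]
  abel

lemma Pmap_smul (g : ℕ) (r : R) (u : Fin (2*g) → R) : Pmap g (r • u) = r • Pmap g u := by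
  unfold Pmap
  rw [omega_smul_left, mul_smul, smul_add]

lemma Pmap_omega (g : ℕ) (u v : Fin (2*g) → R) :
    omegaH R (2*g) (Pmap g u) (Pmap g v) = omegaH R (2*g) u v := by
  unfold Pmap
  rw [omega_add_left, omega_add_right, omega_add_right, omega_smul_left, omega_smul_right,
    omega_smul_right, omega_smul_left, omega_self,
    omega_antisym g (cvec g) v]
  ring

lemma bd_reduce (n : ℕ) (x : Fin n → R) : bdX R n x = ∑ i ∈ range n, extF x i := by
  unfold bdX
  rw [← fin_sum_ext (extF x)]
  exact Finset.sum_congr rfl fun i _ => by rw [extF_lt x i.isLt]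

lemma omega_cvec (g : ℕ) (hg : 1 ≤ g) (u : Fin (2*g) → R) :
    omegaH R (2*g) u (cvec g) = extF u 1 - ∑ k ∈ range g, extF u (2*k) := by
  rw [omega_reduce]
  have h1 : ∀ k ∈ range g, extF u (2*k) * extF (cvec g) (2*k+1) = -(extF u (2*k)) := by
    intro k hk
    rw [mem_range] at hk
    rw [extF_lt _ (show 2*k+1 < 2*g by omega)]
    show extF u (2*k) * (if (2*k+1) % 2 = 1 ∨ (2*k+1) = 0 then (-1:R) else 0) = _
    rw [if_pos (Or.inl (by omega))]
    ring
  have h2 : ∀ k ∈ range g, extF u (2*k+1) * extF (cvec g) (2*k) = if k = 0 then -(extF u 1) else 0 := by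
    intro k hk
    rw [mem_range] at hk
    rw [extF_lt _ (show 2*k < 2*g by omega)]
    show extF u (2*k+1) * (if (2*k) % 2 = 1 ∨ (2*k) = 0 then (-1:R) else 0) = _
    rcases eq_or_ne k 0 with rfl | hne
    · rw [if_pos (Or.inr (by omega)), if_pos rfl]
      norm_num
    · rw [if_neg (by omega), if_neg hne, mul_zero]
  rw [Finset.sum_congr rfl h1, Finset.sum_congr rfl h2, Finset.sum_neg_distrib,
    Finset.sum_ite_eq' (range g) 0 (fun _ => -(extF u 1)), if_pos (mem_range.mpr (by omega))]
  ring

lemma omega_e1 (g : ℕ) (hg : 1 ≤ g) (v : Fin (2*g) → R) :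
    omegaH R (2*g) (stdE1 R (2*g)) v = extF v 1 := by
  rw [omega_reduce]
  have h1 : ∀ k ∈ range g, extF (stdE1 R (2*g)) (2*k) * extF v (2*k+1)
      = if k = 0 then extF v 1 else 0 := by
    intro k hk
    rw [mem_range] at hk
    rw [extF_lt _ (show 2*k < 2*g by omega)]
    show (if (2*k) = 0 then (1:R) else 0) * extF v (2*k+1) = _
    rcases eq_or_ne k 0 with rfl | hne
    · rw [if_pos (by omega), if_pos rfl]
      norm_num
    · rw [if_neg (by omega), if_neg hne, zero_mul]
  have h2 : ∀ k ∈ range g, extF (stdE1 R (2*g)) (2*k+1) * extF v (2*k) = 0 := by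
    intro k hk
    rw [mem_range] at hk
    rw [extF_lt _ (show 2*k+1 < 2*g by omega)]
    show (if (2*k+1) = 0 then (1:R) else 0) * extF v (2*k) = 0
    rw [if_neg (by omega), zero_mul]
  rw [Finset.sum_congr rfl h1, Finset.sum_congr rfl h2,
    Finset.sum_ite_eq' (range g) 0 (fun _ => extF v 1), if_pos (mem_range.mpr (by omega)),
    Finset.sum_const_zero, sub_zero]

def dvec (g : ℕ) (m : ℕ) : Fin (2*g) → R := fun i => if i.val = m then 1 else 0

lemma omega_dvec_odd (g : ℕ) {k₀ : ℕ} (hk : k₀ < g) (w : Fin (2*g) → R) :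
    omegaH R (2*g) w (dvec g (2*k₀+1)) = extF w (2*k₀) := by
  rw [omega_reduce]
  have h1 : ∀ k ∈ range g, extF w (2*k) * extF (dvec g (2*k₀+1)) (2*k+1)
      = if k = k₀ then extF w (2*k₀) else 0 := by
    intro k hk'
    rw [mem_range] at hk'
    rw [extF_lt _ (show 2*k+1 < 2*g by omega)]
    show extF w (2*k) * (if 2*k+1 = 2*k₀+1 then (1:R) else 0) = _
    rcases eq_or_ne k k₀ with rfl | hne
    · rw [if_pos rfl, if_pos rfl, mul_one]
    · rw [if_neg (by omega), if_neg hne, mul_zero]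
  have h2 : ∀ k ∈ range g, extF w (2*k+1) * extF (dvec g (2*k₀+1)) (2*k) = 0 := by
    intro k hk'
    rw [mem_range] at hk'
    rw [extF_lt _ (show 2*k < 2*g by omega)]
    show extF w (2*k+1) * (if 2*k = 2*k₀+1 then (1:R) else 0) = 0
    rw [if_neg (by omega), mul_zero]
  rw [Finset.sum_congr rfl h1, Finset.sum_congr rfl h2,
    Finset.sum_ite_eq' (range g) k₀ (fun _ => extF w (2*k₀)), if_pos (mem_range.mpr hk),
    Finset.sum_const_zero, sub_zero]

lemma omega_dvec_even (g : ℕ) {k₀ : ℕ} (hk : k₀ < g) (w : Fin (2*g) → R) :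
    omegaH R (2*g) w (dvec g (2*k₀)) = -(extF w (2*k₀+1)) := by
  rw [omega_reduce]
  have h1 : ∀ k ∈ range g, extF w (2*k) * extF (dvec g (2*k₀)) (2*k+1) = 0 := by
    intro k hk'
    rw [mem_range] at hk'
    rw [extF_lt _ (show 2*k+1 < 2*g by omega)]
    show extF w (2*k) * (if 2*k+1 = 2*k₀ then (1:R) else 0) = 0
    rw [if_neg (by omega), mul_zero]
  have h2 : ∀ k ∈ range g, extF w (2*k+1) * extF (dvec g (2*k₀)) (2*k)
      = if k = k₀ then extF w (2*k₀+1) else 0 := by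
    intro k hk'
    rw [mem_range] at hk'
    rw [extF_lt _ (show 2*k < 2*g by omega)]
    show extF w (2*k+1) * (if 2*k = 2*k₀ then (1:R) else 0) = _
    rcases eq_or_ne k k₀ with rfl | hne
    · rw [if_pos rfl, if_pos rfl, mul_one]
    · rw [if_neg (by omega), if_neg hne, mul_zero]
  rw [Finset.sum_congr rfl h1, Finset.sum_congr rfl h2,
    Finset.sum_ite_eq' (range g) k₀ (fun _ => extF w (2*k₀+1)), if_pos (mem_range.mpr hk),
    Finset.sum_const_zero, zero_sub]

lemma omega_nondeg (g : ℕ) (u v : Fin (2*g) → R)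
    (h : ∀ y, omegaH R (2*g) u y = omegaH R (2*g) v y) : u = v := by
  funext i
  have hi := i.isLt
  rw [← extF_lt u hi, ← extF_lt v hi]
  by_cases hpar : i.val % 2 = 0
  · obtain ⟨k, hk⟩ : ∃ k, i.val = 2*k := ⟨i.val/2, by omega⟩
    have hkg : k < g := by omega
    rw [hk, ← omega_dvec_odd g hkg u, ← omega_dvec_odd g hkg v, h]
  · obtain ⟨k, hk⟩ : ∃ k, i.val = 2*k+1 := ⟨i.val/2, by omega⟩
    have hkg : k < g := by omega
    rw [hk, ← neg_neg (extF u _), ← omega_dvec_even g hkg u, ← neg_neg (extF v _),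
      ← omega_dvec_even g hkg v, h]

def TU (g : ℕ) : (Fin (2*g) → R) ≃ₗ[R] (Fin (2*g) → R) where
  toFun := Umap g
  invFun := Vmap g
  left_inv := Vmap_Umap g
  right_inv := Umap_Vmap g
  map_add' := Umap_add g
  map_smul' := Umap_smul g

def TP (g : ℕ) : (Fin (2*g) → R) ≃ₗ[R] (Fin (2*g) → R) where
  toFun := Pmap g
  invFun := Qmap g
  left_inv := Qmap_Pmap g
  right_inv := Pmap_Qmap g
  map_add' := Pmap_add g
  map_smul' := Pmap_smul g

def Tfull (g : ℕ) : (Fin (2*g) → R) ≃ₗ[R] (Fin (2*g) → R) := (TU g).trans (TP g)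

lemma Tfull_apply (g : ℕ) (x : Fin (2*g) → R) : Tfull g x = Pmap g (Umap g x) := rfl

lemma Tfull_omega (g : ℕ) (x y : Fin (2*g) → R) :
    omegaH R (2*g) (Tfull g x) (Tfull g y) = lamX R (2*g) x y := by
  rw [Tfull_apply, Tfull_apply, Pmap_omega, omega_Umap]

lemma Tfull_bd (g : ℕ) (hg : 1 ≤ g) (x : Fin (2*g) → R) :
    omegaH R (2*g) (stdE1 R (2*g)) (Tfull g x) = bdX R (2*g) x := by
  rw [omega_e1 g hg, Tfull_apply]
  have h1 : extF (Pmap g (Umap g x)) 1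
      = extF (Umap g x) 1 + omegaH R (2*g) (Umap g x) (cvec g) * extF (cvec g) 1 := by
    have h2 : (1:ℕ) < 2*g := by omega
    rw [extF_lt _ h2]
    unfold Pmap
    rw [Pi.add_apply, Pi.smul_apply, smul_eq_mul, extF_lt _ h2, extF_lt _ h2]
  have hc : extF (cvec g) 1 = (-1 : R) := by
    rw [extF_lt _ (show (1:ℕ) < 2*g by omega)]
    show (if 1 % 2 = 1 ∨ 1 = 0 then (-1:R) else 0) = -1
    rw [if_pos (Or.inl rfl)]
  rw [h1, hc, omega_cvec g hg, bd_reduce, sum_range_two_mul]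
  rw [Finset.sum_congr rfl (fun k hk => extF_Umap_even (mem_range.mp hk) x)]
  ring

end AutXAux

/-- the automorphism group of `X^{#2g}` is isomorphic, as a group, to the
stabilizer in `Sp_{2g}(R)` of the first standard basis vector `e₁` of `R^{2g}`. -/
theorem autX_even_iso_SpStab (R : Type) [CommRing R] (g : ℕ) (hg : 1 ≤ g) :
    Nonempty (↥(AutX R (2 * g)) ≃* ↥(SpStabE1 R (2 * g))) := by
  classical
  obtain ⟨t, hω, hbd⟩ : ∃ t : (Fin (2*g) → R) ≃ₗ[R] (Fin (2*g) → R),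
      (∀ x y, omegaH R (2*g) (t x) (t y) = lamX R (2*g) x y) ∧
      (∀ x, omegaH R (2*g) (stdE1 R (2*g)) (t x) = bdX R (2*g) x) :=
    ⟨AutXAux.Tfull g, AutXAux.Tfull_omega g, AutXAux.Tfull_bd g hg⟩
  have main : ∀ a : (Fin (2*g) → R) ≃ₗ[R] (Fin (2*g) → R),
      a ∈ AutX R (2*g) ↔ t * a * t⁻¹ ∈ SpStabE1 R (2*g) := by
    intro a
    constructor
    · intro ha
      obtain ⟨hl, hb⟩ := ha
      have hsymp : ∀ x y, omegaH R (2*g) ((t * a * t⁻¹) x) ((t * a * t⁻¹) y)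
          = omegaH R (2*g) x y := by
        intro x y
        show omegaH R (2*g) (t (a (t.symm x))) (t (a (t.symm y))) = _
        rw [hω, hl, ← hω, t.apply_symm_apply, t.apply_symm_apply]
      refine ⟨hsymp, ?_⟩
      have hbinv : ∀ z, bdX R (2*g) (a.symm z) = bdX R (2*g) z := by
        intro z
        conv_rhs => rw [← a.apply_symm_apply z, hb]
      apply AutXAux.omega_nondeg g
      intro y
      have hBinv : ((t * a * t⁻¹)⁻¹ : (Fin (2*g) → R) ≃ₗ[R] (Fin (2*g) → R)) y
          = t (a.symm (t.symm y)) := by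
        rw [show ((t * a * t⁻¹)⁻¹ : (Fin (2*g) → R) ≃ₗ[R] (Fin (2*g) → R))
          = t * a⁻¹ * t⁻¹ by group]
        rfl
      calc omegaH R (2*g) ((t * a * t⁻¹) (stdE1 R (2*g))) y
          = omegaH R (2*g) ((t * a * t⁻¹) (stdE1 R (2*g)))
              ((t * a * t⁻¹) ((t * a * t⁻¹)⁻¹ y)) := by
            rw [show (t * a * t⁻¹) ((t * a * t⁻¹)⁻¹ y) = y from
              (t * a * t⁻¹).apply_symm_apply y]
        _ = omegaH R (2*g) (stdE1 R (2*g)) ((t * a * t⁻¹)⁻¹ y) := hsymp _ _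
        _ = omegaH R (2*g) (stdE1 R (2*g)) (t (a.symm (t.symm y))) := by rw [hBinv]
        _ = bdX R (2*g) (a.symm (t.symm y)) := hbd _
        _ = bdX R (2*g) (t.symm y) := hbinv _
        _ = omegaH R (2*g) (stdE1 R (2*g)) (t (t.symm y)) := (hbd _).symm
        _ = omegaH R (2*g) (stdE1 R (2*g)) y := by rw [t.apply_symm_apply]
    · intro hb
      obtain ⟨hs, he⟩ := hb
      constructor
      · intro x y
        have h1 := hs (t x) (t y)
        rw [show (t * a * t⁻¹) (t x) = t (a x) by
            show t (a (t.symm (t x))) = t (a x); rw [t.symm_apply_apply],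
          show (t * a * t⁻¹) (t y) = t (a y) by
            show t (a (t.symm (t y))) = t (a y); rw [t.symm_apply_apply],
          hω, hω] at h1
        exact h1
      · intro x
        calc bdX R (2*g) (a x) = omegaH R (2*g) (stdE1 R (2*g)) (t (a x)) := (hbd _).symm
          _ = omegaH R (2*g) ((t * a * t⁻¹) (stdE1 R (2*g))) ((t * a * t⁻¹) (t x)) := by
              rw [he, show (t * a * t⁻¹) (t x) = t (a x) by
                show t (a (t.symm (t x))) = t (a x); rw [t.symm_apply_apply]]
          _ = omegaH R (2*g) (stdE1 R (2*g)) (t x) := hs _ _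
          _ = bdX R (2*g) x := hbd _
  refine ⟨{ toFun := fun a => ⟨t * a.1 * t⁻¹, (main a.1).mp a.2⟩,
            invFun := fun b => ⟨t⁻¹ * b.1 * t, (main _).mpr (by
              rw [show t * (t⁻¹ * b.1 * t) * t⁻¹ = b.1 by group]
              exact b.2)⟩,
            left_inv := fun a => Subtype.ext (by
              show t⁻¹ * (t * a.1 * t⁻¹) * t = a.1
              group),
            right_inv := fun b => Subtype.ext (by
              show t * (t⁻¹ * b.1 * t) * t⁻¹ = b.1
              group),
            map_mul' := fun a b => Subtype.ext (by
              show t * (a.1 * b.1) * t⁻¹ = (t * a.1 * t⁻¹) * (t * b.1 * t⁻¹)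
              group) }⟩
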